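/- arXiv:2402.15621 — 7 statements merged into one kernel-verified Lean document; each statement's English description precedes it below -/
import Mathlib

section
/- Let T be a tree, e = {u, u'} an edge of T, and let A be the component of T - e containing u and B the component containing u'. If w is a vertex in A and I is a finite multiset of vertices all lying in A, then d_T({u, w} ∪ I) + 1 = d_T({u', w} ∪ I). -/
open SimpleGraph

/-- The Steiner distance of a set `S` of vertices of `G`: the minimum number of edges
of a connected subgraph of `G` containing `S`. -/
noncomputable def steinerDist {V : Type*} (G : SimpleGraph V) (S : Set V) : ℕ :=
  sInf {m | ∃ H : G.Subgraph, H.Connected ∧ S ⊆ H.verts ∧ H.edgeSet.ncard = m}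

lemma walk_cases {V : Type*} {G : SimpleGraph V} (u u' : V) {x y : V}
    (p : G.Walk x y) :
    (G.deleteEdges {s(u,u')}).Reachable x y ∨
    ((G.deleteEdges {s(u,u')}).Reachable x u ∧ (G.deleteEdges {s(u,u')}).Reachable u' y) ∨
    ((G.deleteEdges {s(u,u')}).Reachable x u' ∧ (G.deleteEdges {s(u,u')}).Reachable u y) := by
  induction p with
  | nil => exact Or.inl (Reachable.refl _)
  | @cons a b c h q ih =>
    by_cases he : s(a, b) = s(u, u')
    · rw [Sym2.eq_iff] at he
      rcases he with ⟨rfl, rfl⟩ | ⟨rfl, rfl⟩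
      · rcases ih with h1 | ⟨h1, h2⟩ | ⟨h1, h2⟩
        · exact Or.inr (Or.inl ⟨Reachable.refl _, h1⟩)
        · exact Or.inr (Or.inl ⟨Reachable.refl _, h2⟩)
        · exact Or.inl h2
      · rcases ih with h1 | ⟨h1, h2⟩ | ⟨h1, h2⟩
        · exact Or.inr (Or.inr ⟨Reachable.refl _, h1⟩)
        · exact Or.inl h2
        · exact Or.inr (Or.inr ⟨Reachable.refl _, h2⟩)
    · have hab : (G.deleteEdges {s(u,u')}).Adj a b := by
        simp [h, he]
      rcases ih with h1 | ⟨h1, h2⟩ | ⟨h1, h2⟩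
      · exact Or.inl (hab.reachable.trans h1)
      · exact Or.inr (Or.inl ⟨hab.reachable.trans h1, h2⟩)
      · exact Or.inr (Or.inr ⟨hab.reachable.trans h1, h2⟩)

lemma lower_lemma {V : Type*} [Fintype V] (T : SimpleGraph V)
    (u u' : V) (hbr : ¬ (T.deleteEdges {s(u,u')}).Reachable u u')
    (S : Set V) (hSne : S.Nonempty)
    (hS : ∀ x ∈ S, (T.deleteEdges {s(u,u')}).Reachable u x)
    (H : T.Subgraph) (hHc : H.Connected) (hHS : insert u' S ⊆ H.verts) :
    ∃ H2 : T.Subgraph, H2.Connected ∧ insert u S ⊆ H2.verts ∧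
      H2.edgeSet.ncard + 1 ≤ H.edgeSet.ncard := by
  classical
  set T' := T.deleteEdges {s(u,u')} with hT'
  set G' := H.spanningCoe.deleteEdges {s(u,u')} with hG'
  have hu' : u' ∈ H.verts := hHS (Set.mem_insert _ _)
  have hmono : G' ≤ T' := fun a b h => ⟨H.adj_sub h.1, h.2⟩
  -- spanningCoe walks between verts
  have hreach : ∀ x ∈ H.verts, ∀ y ∈ H.verts, H.spanningCoe.Reachable x y := by
    intro x hx y hy
    have h1 : H.coe.Reachable ⟨x, hx⟩ ⟨y, hy⟩ :=
      (SimpleGraph.Subgraph.connected_iff'.mp hHc).preconnected _ _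
    exact h1.map ⟨Subtype.val, fun h => h⟩
  -- every member of S is G'-reachable from u
  have hC : ∀ x ∈ S, G'.Reachable u x := by
    intro x hx
    obtain ⟨p⟩ := hreach u' hu' x (hHS (Set.mem_insert_of_mem _ hx))
    rcases walk_cases u u' p with h1 | ⟨h1, h2⟩ | ⟨h1, h2⟩
    · exact absurd ((hS x hx).trans (h1.mono hmono).symm) hbr
    · exact absurd (h1.mono hmono).symm hbr
    · exact h2
  -- the deleted edge belongs to H
  have he : s(u, u') ∈ H.edgeSet := by
    by_contra hne
    obtain ⟨x0, hx0⟩ := hSne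
    obtain ⟨p⟩ := hreach u' hu' x0 (hHS (Set.mem_insert_of_mem _ hx0))
    have hp : ∀ e ∈ p.edges, e ∈ T'.edgeSet := by
      intro e hep
      have heH : e ∈ H.spanningCoe.edgeSet := p.edges_subset_edgeSet hep
      have heH' : e ∈ H.edgeSet := by
        induction e using Sym2.ind with
        | _ a b => exact heH
      rw [edgeSet_deleteEdges]
      exact ⟨H.edgeSet_subset heH', by rintro rfl; exact hne heH'⟩
    have : T'.Reachable u' x0 := ⟨(p.transfer T' hp)⟩
    exact hbr ((hS x0 hx0).trans this.symm)
  set C : Set V := {x | G'.Reachable u x} with hCdef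
  have hu'nC : u' ∉ C := fun h => hbr (h.mono hmono)
  -- the restricted subgraph
  set H2 : T.Subgraph :=
    { verts := C
      Adj := fun x y => H.Adj x y ∧ x ∈ C ∧ y ∈ C
      adj_sub := fun h => H.adj_sub h.1
      edge_vert := fun h => h.2.1
      symm := ⟨fun x y h => ⟨h.1.symm, h.2.2, h.2.1⟩⟩ } with hH2
  have claim : ∀ {a b : V} (p : G'.Walk a b) (ha : a ∈ C) (hb : b ∈ C),
      H2.coe.Reachable ⟨a, ha⟩ ⟨b, hb⟩ := by
    intro a b p
    induction p with
    | nil => intro ha hb; rfl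
    | @cons a c b h q ih =>
      intro ha hb
      have hc : c ∈ C := ha.trans h.reachable
      have hadj2 : H2.coe.Adj ⟨a, ha⟩ ⟨c, hc⟩ := ⟨h.1, ha, hc⟩
      exact hadj2.reachable.trans (ih hc hb)
  have hH2conn : H2.Connected := by
    rw [SimpleGraph.Subgraph.connected_iff', connected_iff]
    refine ⟨?_, ⟨⟨u, Reachable.refl _⟩⟩⟩
    rintro ⟨x, hx⟩ ⟨y, hy⟩
    obtain ⟨p⟩ := id hx
    obtain ⟨q⟩ := id hy
    exact (claim p (Reachable.refl _) hx).symm.trans (claim q (Reachable.refl _) hy)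
  refine ⟨H2, hH2conn, ?_, ?_⟩
  · intro x hx
    rcases hx with rfl | hx
    · exact Reachable.refl _
    · exact hC x hx
  · have hsub : H2.edgeSet ⊆ H.edgeSet \ {s(u, u')} := by
      intro e he2
      induction e using Sym2.ind with
      | _ a b =>
        obtain ⟨hab, haC, hbC⟩ := he2
        refine ⟨hab, ?_⟩
        intro heq
        rw [Set.mem_singleton_iff, Sym2.eq_iff] at heq
        rcases heq with ⟨rfl, rfl⟩ | ⟨rfl, rfl⟩
        · exact hu'nC hbC
        · exact hu'nC haC
    calc H2.edgeSet.ncard + 1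
        ≤ (H.edgeSet \ {s(u, u')}).ncard + 1 :=
          Nat.add_le_add_right (Set.ncard_le_ncard hsub (Set.toFinite _)) 1
      _ = H.edgeSet.ncard := Set.ncard_diff_singleton_add_one he (Set.toFinite _)


/-- Let `e = {u, u'}` be an edge of a tree `T`, `A` the component of `T - e` containing `u`.
If `w ∈ A` and all members of a finite multiset `I` of vertices lie in `A`, then
`d_T({u,w} ∪ I) + 1 = d_T({u',w} ∪ I)`. -/
theorem stmt2 {V : Type*} [Fintype V] (T : SimpleGraph V) (hT : T.IsTree)
    (u u' : V) (hadj : T.Adj u u')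
    (w : V) (hw : (T.deleteEdges {s(u, u')}).Reachable u w)
    (I : Multiset V) (hI : ∀ i ∈ I, (T.deleteEdges {s(u, u')}).Reachable u i) :
    steinerDist T ({u, w} ∪ {a | a ∈ I}) + 1 = steinerDist T ({u', w} ∪ {a | a ∈ I}) := by
  classical
  set T' := T.deleteEdges {s(u,u')} with hT'def
  have hbr : ¬ T'.Reachable u u' := by
    have hb : T.IsBridge s(u, u') :=
      isAcyclic_iff_forall_adj_isBridge.mp hT.2 hadj
    exact isBridge_iff.mp hb
  set S0 : Set V := insert w {a | a ∈ I} with hS0def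
  have hS0 : ∀ x ∈ S0, T'.Reachable u x := by
    rintro x (rfl | hx)
    · exact hw
    · exact hI x hx
  have hS0ne : S0.Nonempty := ⟨w, Set.mem_insert _ _⟩
  have hSeq : ({u, w} ∪ {a | a ∈ I} : Set V) = insert u S0 := by
    simp [hS0def, Set.insert_union]
  have hSeq' : ({u', w} ∪ {a | a ∈ I} : Set V) = insert u' S0 := by
    simp [hS0def, Set.insert_union]
  rw [hSeq, hSeq']
  have hne : ∀ S : Set V,
      {m | ∃ H : T.Subgraph, H.Connected ∧ S ⊆ H.verts ∧ H.edgeSet.ncard = m}.Nonempty := by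
    intro S
    refine ⟨(⊤ : T.Subgraph).edgeSet.ncard, ⊤, ?_, by simp, rfl⟩
    exact SimpleGraph.Subgraph.connected_iff'.mpr
      (Subgraph.topIso.connected_iff.mpr hT.1)
  have h1 : steinerDist T (insert u' S0) ≤ steinerDist T (insert u S0) + 1 := by
    obtain ⟨H, hc, hsub, hcard⟩ := Nat.sInf_mem (hne (insert u S0))
    have huH : u ∈ H.verts := hsub (Set.mem_insert _ _)
    set H3 := H ⊔ T.subgraphOfAdj hadj with hH3
    have hc3 : H3.Connected := by
      refine Subgraph.connected_sup hc.preconnected (SimpleGraph.Subgraph.subgraphOfAdj_connected hadj).preconnected ⟨u, ?_⟩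
      exact ⟨huH, by simp⟩
    have hsub3 : insert u' S0 ⊆ H3.verts := by
      rintro x (rfl | hx)
      · exact Or.inr (by simp)
      · exact Or.inl (hsub (Set.mem_insert_of_mem _ hx))
    have hcard3 : H3.edgeSet.ncard ≤ steinerDist T (insert u S0) + 1 := by
      calc H3.edgeSet.ncard = (H.edgeSet ∪ (T.subgraphOfAdj hadj).edgeSet).ncard := by
            rw [Subgraph.edgeSet_sup]
        _ ≤ H.edgeSet.ncard + (T.subgraphOfAdj hadj).edgeSet.ncard := Set.ncard_union_le _ _
        _ = steinerDist T (insert u S0) + 1 := by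
            rw [hcard, edgeSet_subgraphOfAdj, Set.ncard_singleton]; rfl
    exact le_trans (Nat.sInf_le ⟨H3, hc3, hsub3, rfl⟩) hcard3
  have h2 : steinerDist T (insert u S0) + 1 ≤ steinerDist T (insert u' S0) := by
    obtain ⟨H, hc, hsub, hcard⟩ := Nat.sInf_mem (hne (insert u' S0))
    obtain ⟨H2, hc2, hsub2, hcard2⟩ :=
      lower_lemma T u u' hbr S0 hS0ne hS0 H hc hsub
    calc steinerDist T (insert u S0) + 1 ≤ H2.edgeSet.ncard + 1 :=
          Nat.add_le_add_right (Nat.sInf_le (show H2.edgeSet.ncard ∈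
            {m | ∃ H : T.Subgraph, H.Connected ∧ insert u S0 ⊆ H.verts ∧ H.edgeSet.ncard = m}
            from ⟨H2, hc2, hsub2, rfl⟩)) 1
      _ ≤ H.edgeSet.ncard := hcard2
      _ = steinerDist T (insert u' S0) := hcard
  omega
end

section
/- Let T be a tree, e = {u, u'} an edge of T with components A ∋ u and B ∋ u' of T - e. If a set I of vertices meets both A and B, then for every vertex w, d_T({u, w} ∪ I) = d_T({u', w} ∪ I). -/
open SimpleGraph

/-- In a tree, any connected subgraph containing a vertex reachable from `u` and a vertex
reachable from `u'` after deleting the edge `{u, u'}` must contain both `u` and `u'`. -/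
lemma key_mem {V : Type*} (T : SimpleGraph V) (hT : T.IsTree)
    (u u' : V) (hadj : T.Adj u u') (H : T.Subgraph) (hH : H.Connected)
    {i j : V} (hi : i ∈ H.verts) (hj : j ∈ H.verts)
    (hri : (T.deleteEdges {s(u, u')}).Reachable u i)
    (hrj : (T.deleteEdges {s(u, u')}).Reachable u' j) :
    u ∈ H.verts ∧ u' ∈ H.verts := by
  have hb : T.IsBridge s(u, u') :=
    (isAcyclic_iff_forall_adj_isBridge.mp hT.IsAcyclic) hadj
  obtain ⟨p⟩ := hH.preconnected ⟨i, hi⟩ ⟨j, hj⟩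
  have hq : s(u, u') ∈ (p.map H.hom).edges := by
    by_contra hmem
    have r : (T.deleteEdges {s(u, u')}).Walk i j := (p.map H.hom).toDeleteEdge _ hmem
    exact ((isBridge_iff.mp hb)) ((hri.trans ⟨r⟩).trans hrj.symm)
  rw [Walk.edges_map] at hq
  obtain ⟨e, he, hmap⟩ := List.mem_map.mp hq
  induction e with
  | h a b =>
    simp only [Sym2.map_pair_eq, Sym2.eq_iff] at hmap
    rcases hmap with ⟨h1, h2⟩ | ⟨h1, h2⟩
    · exact ⟨h1 ▸ a.2, h2 ▸ b.2⟩
    · exact ⟨h2 ▸ b.2, h1 ▸ a.2⟩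

/-- Let `e = {u, u'}` be an edge of a tree `T`, with components `A ∋ u` and `B ∋ u'`
of `T - e`.  If a set `I` of vertices meets both `A` and `B`, then for every vertex `w`,
`d_T({u,w} ∪ I) = d_T({u',w} ∪ I)`. -/
theorem stmt4 {V : Type*} [Fintype V] (T : SimpleGraph V) (hT : T.IsTree)
    (u u' : V) (hadj : T.Adj u u') (I : Set V)
    (hIA : ∃ i ∈ I, (T.deleteEdges {s(u, u')}).Reachable u i)
    (hIB : ∃ i ∈ I, (T.deleteEdges {s(u, u')}).Reachable u' i) :
    ∀ w : V, steinerDist T ({u, w} ∪ I) = steinerDist T ({u', w} ∪ I) := by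
  intro w
  obtain ⟨i, hiI, hri⟩ := hIA
  obtain ⟨j, hjI, hrj⟩ := hIB
  unfold steinerDist
  congr 1
  ext m
  constructor
  · rintro ⟨H, hc, hsub, hcard⟩
    refine ⟨H, hc, ?_, hcard⟩
    have hi : i ∈ H.verts := hsub (Or.inr hiI)
    have hj : j ∈ H.verts := hsub (Or.inr hjI)
    have hmem := key_mem T hT u u' hadj H hc hi hj hri hrj
    intro x hx
    simp only [Set.mem_union, Set.mem_insert_iff, Set.mem_singleton_iff] at hx
    rcases hx with (rfl | rfl) | hx
    · exact hmem.2
    · exact hsub (Or.inl (Or.inr rfl))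
    · exact hsub (Or.inr hx)
  · rintro ⟨H, hc, hsub, hcard⟩
    refine ⟨H, hc, ?_, hcard⟩
    have hi : i ∈ H.verts := hsub (Or.inr hiI)
    have hj : j ∈ H.verts := hsub (Or.inr hjI)
    have hmem := key_mem T hT u u' hadj H hc hi hj hri hrj
    intro x hx
    simp only [Set.mem_union, Set.mem_insert_iff, Set.mem_singleton_iff] at hx
    rcases hx with (rfl | rfl) | hx
    · exact hmem.1
    · exact hsub (Or.inl (Or.inr rfl))
    · exact hsub (Or.inr hx)
end

section
/- Let T be a tree, e = {u, u'} an edge of T, A and B the components of T - e containing u and u' respectively. If w and w' are two vertices lying in the same component of T - e, then for every finite set I of vertices, d_T({u, w} ∪ I) - d_T({u', w} ∪ I) = d_T({u, w'} ∪ I) - d_T({u', w'} ∪ I). -/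
open SimpleGraph

section Aux

variable {V : Type*} {T : SimpleGraph V}

/-- Edges of `T` whose deletion separates two vertices of `S`. -/
def sepEdges (T : SimpleGraph V) (S : Set V) : Set (Sym2 V) :=
  {f | f ∈ T.edgeSet ∧ ∃ a ∈ S, ∃ b ∈ S, ¬ (T.deleteEdges {f}).Reachable a b}

lemma sepEdges_mono {S S' : Set V} (h : S ⊆ S') :
    sepEdges T S ⊆ sepEdges T S' := by
  rintro f ⟨hf, a, ha, b, hb, hr⟩
  exact ⟨hf, a, h ha, b, h hb, hr⟩

/-- Every connected subgraph containing `S` contains all separating edges of `S`. -/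
lemma sepEdges_subset_edgeSet {H : T.Subgraph} (hH : H.Connected)
    {S : Set V} (hS : S ⊆ H.verts) : sepEdges T S ⊆ H.edgeSet := by
  rintro f ⟨hf, a, ha, b, hb, hr⟩
  by_contra hfH
  apply hr
  have h := hH ⟨a, hS ha⟩ ⟨b, hS hb⟩
  exact h.map ⟨Subtype.val, fun {x y} hxy => by
    rw [SimpleGraph.deleteEdges_adj]
    refine ⟨hxy.adj_sub, ?_⟩
    intro hfx
    rw [Set.mem_singleton_iff] at hfx
    exact hfH (hfx ▸ (Subgraph.mem_edgeSet.mpr hxy))⟩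

/-- An edge on the (unique) path between `a` and `b` in a tree separates `a` from `b`. -/
lemma not_reachable_of_mem_path_edges (hT : T.IsTree) {a b : V} {p : T.Walk a b}
    (hp : p.IsPath) {f : Sym2 V} (hf : f ∈ p.edges) :
    ¬ (T.deleteEdges {f}).Reachable a b := by
  classical
  rintro ⟨q⟩
  set q' : (T.deleteEdges {f}).Walk a b := (q.toPath).1 with hq'def
  have hq : q'.IsPath := (q.toPath).2
  have hsub : ∀ e ∈ q'.edges, e ∈ T.edgeSet := fun e he =>
    (SimpleGraph.edgeSet_deleteEdges _ ▸ q'.edges_subset_edgeSet he).1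
  have hq'' : (q'.transfer T hsub).IsPath := hq.transfer hsub
  have := (hT.existsUnique_path a b).unique hp hq''
  rw [this, Walk.edges_transfer] at hf
  have := q'.edges_subset_edgeSet hf
  rw [SimpleGraph.edgeSet_deleteEdges] at this
  exact this.2 rfl

/-- Construction of a connected subgraph containing `insert s₀ S` whose edges all
separate `insert s₀ S`. -/
lemma exists_good_subgraph (hT : T.IsTree) (s₀ : V) {S : Set V} (hfin : S.Finite) :
    ∃ H : T.Subgraph, H.Connected ∧ insert s₀ S ⊆ H.verts ∧
      H.edgeSet ⊆ sepEdges T (insert s₀ S) := by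
  refine Set.Finite.induction_on (motive := fun S _ => ∃ H : T.Subgraph, H.Connected ∧
      insert s₀ S ⊆ H.verts ∧ H.edgeSet ⊆ sepEdges T (insert s₀ S)) S hfin ?_ ?_
  · refine ⟨T.singletonSubgraph s₀, Subgraph.singletonSubgraph_connected, ?_, ?_⟩
    · simp [SimpleGraph.singletonSubgraph_verts]
    · simp [SimpleGraph.edgeSet_singletonSubgraph]
  · rintro a S haS hSfin ih
    obtain ⟨H, hc, hv, he⟩ := ih
    obtain ⟨p, hp, -⟩ := hT.existsUnique_path s₀ a
    refine ⟨H ⊔ p.toSubgraph, ?_, ?_, ?_⟩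
    · refine Subgraph.connected_sup hc.preconnected p.toSubgraph_connected.preconnected ⟨s₀, ?_, ?_⟩
      · exact hv (Set.mem_insert _ _)
      · exact p.start_mem_verts_toSubgraph
    · intro x hx
      rcases hx with rfl | hx
      · exact Or.inl (hv (Set.mem_insert _ _))
      · rcases hx with rfl | hx
        · exact Or.inr p.end_mem_verts_toSubgraph
        · exact Or.inl (hv (Set.mem_insert_of_mem _ hx))
    · rw [Subgraph.edgeSet_sup]
      rintro f (hf | hf)
      · refine sepEdges_mono ?_ (he hf)
        exact Set.insert_subset_insert (Set.subset_insert _ _)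
      · rw [Walk.mem_edges_toSubgraph] at hf
        refine ⟨p.edges_subset_edgeSet hf, s₀, Set.mem_insert _ _,
          a, Set.mem_insert_of_mem _ (Set.mem_insert _ _), ?_⟩
        exact not_reachable_of_mem_path_edges hT hp hf

lemma finite_sym2 [Finite V] : Finite (Sym2 V) := by
  have : Finite (V × V) := inferInstance
  exact Finite.of_surjective (fun p : V × V => s(p.1, p.2)) (fun z => by
    obtain ⟨x, y⟩ := z
    exact ⟨(x, y), rfl⟩)

/-- In a finite tree, the Steiner distance of a nonempty finite set is the number of its
separating edges. -/
lemma steinerDist_eq_sepEdges_ncard [Finite V] (hT : T.IsTree) (s₀ : V) {S : Set V}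
    (hfin : S.Finite) :
    steinerDist T (insert s₀ S) = (sepEdges T (insert s₀ S)).ncard := by
  have : Finite (Sym2 V) := finite_sym2
  obtain ⟨H, hc, hv, he⟩ := exists_good_subgraph hT s₀ hfin
  have heq : H.edgeSet = sepEdges T (insert s₀ S) :=
    le_antisymm he (sepEdges_subset_edgeSet hc hv)
  refine le_antisymm (Nat.sInf_le ⟨H, hc, hv, by rw [heq]⟩) ?_
  refine le_csInf ⟨_, H, hc, hv, rfl⟩ ?_
  rintro m ⟨H', hc', hv', rfl⟩
  exact Set.ncard_le_ncard (sepEdges_subset_edgeSet hc' hv') (Set.toFinite _)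

/-- Dichotomy: after deleting the edge `{u,u'}`, every vertex reaches `u` or `u'`. -/
lemma reach_dichotomy_step {u u' : V} {x z : V} (p : T.Walk x z)
    (hx : (T.deleteEdges {s(u, u')}).Reachable x u ∨ (T.deleteEdges {s(u, u')}).Reachable x u') :
    (T.deleteEdges {s(u, u')}).Reachable z u ∨ (T.deleteEdges {s(u, u')}).Reachable z u' := by
  induction p with
  | nil => exact hx
  | @cons a b c hab q ih =>
      apply ih
      by_cases hfe : s(a, b) = s(u, u')
      · rw [Sym2.eq_iff] at hfe
        rcases hfe with ⟨rfl, rfl⟩ | ⟨rfl, rfl⟩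
        · exact Or.inr (Reachable.refl _)
        · exact Or.inl (Reachable.refl _)
      · have hadj : (T.deleteEdges {s(u, u')}).Adj a b := by
          rw [SimpleGraph.deleteEdges_adj]
          exact ⟨hab, by simpa using hfe⟩
        rcases hx with h | h
        · exact Or.inl (hadj.symm.reachable.trans h)
        · exact Or.inr (hadj.symm.reachable.trans h)

lemma reach_dichotomy {u u' x : V} (h : T.Reachable u x) :
    (T.deleteEdges {s(u, u')}).Reachable x u ∨ (T.deleteEdges {s(u, u')}).Reachable x u' := by
  obtain ⟨p⟩ := h
  exact reach_dichotomy_step p (Or.inl (Reachable.refl _))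

lemma not_reach_endpoints (hT : T.IsTree) {u u' : V} (hadj : T.Adj u u') :
    ¬ (T.deleteEdges {s(u, u')}).Reachable u u' := by
  have hp : (Walk.cons hadj Walk.nil).IsPath := by
    simp [Walk.isPath_def, hadj.ne]
  exact not_reachable_of_mem_path_edges hT hp (by simp)

/-- Characterization of membership of the edge `{u,u'}` in `sepEdges T (insert u S)`. -/
lemma edge_mem_sepEdges_iff (hT : T.IsTree) {u u' : V} (hadj : T.Adj u u') (S : Set V) :
    s(u, u') ∈ sepEdges T (insert u S) ↔
      ∃ x ∈ S, ¬ (T.deleteEdges {s(u, u')}).Reachable u x := by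
  set D := T.deleteEdges {s(u, u')} with hD
  have hnot : ¬ D.Reachable u u' := not_reach_endpoints hT hadj
  constructor
  · rintro ⟨-, a, ha, b, hb, hr⟩
    have hconn := hT.isConnected
    have hda := reach_dichotomy (u' := u') (hconn.preconnected u a)
    have hdb := reach_dichotomy (u' := u') (hconn.preconnected u b)
    rcases hda with hda | hda <;> rcases hdb with hdb | hdb
    · exact absurd (hda.trans hdb.symm) hr
    · -- a reaches u, b reaches u'
      have hbu : b ≠ u := by rintro rfl; exact hnot hdb
      have hbS : b ∈ S := hb.resolve_left hbu
      refine ⟨b, hbS, fun hub => hnot (hub.trans hdb)⟩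
    · -- a reaches u', b reaches u
      have hau : a ≠ u := by rintro rfl; exact hnot hda
      have haS : a ∈ S := ha.resolve_left hau
      refine ⟨a, haS, fun hua => hnot (hua.trans hda)⟩
    · exact absurd (hda.trans hdb.symm) hr
  · rintro ⟨x, hx, hr⟩
    exact ⟨T.mem_edgeSet.mpr hadj, u, Set.mem_insert _ _, x, Set.mem_insert_of_mem _ hx, hr⟩

/-- Away from the edge `{u,u'}`, the separating edges of `insert u S` and `insert u' S`
coincide. -/
lemma sepEdges_sdiff_aux {u u' : V} (hadj : T.Adj u u') (S : Set V) {f : Sym2 V}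
    (hfe : f ≠ s(u, u')) (hmem : f ∈ sepEdges T (insert u S)) :
    f ∈ sepEdges T (insert u' S) := by
  obtain ⟨hf, a, ha, b, hb, hr⟩ := hmem
  have huu' : (T.deleteEdges {f}).Reachable u u' := by
    refine Adj.reachable ?_
    rw [SimpleGraph.deleteEdges_adj]
    exact ⟨hadj, by simpa using fun h => hfe h.symm⟩
  rcases ha with rfl | haS <;> rcases hb with rfl | hbS
  · exact absurd (Reachable.refl _) hr
  · exact ⟨hf, u', Set.mem_insert _ _, b, Set.mem_insert_of_mem _ hbS,
      fun h => hr (huu'.trans h)⟩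
  · exact ⟨hf, a, Set.mem_insert_of_mem _ haS, u', Set.mem_insert _ _,
      fun h => hr ((h.trans huu'.symm))⟩
  · exact ⟨hf, a, Set.mem_insert_of_mem _ haS, b, Set.mem_insert_of_mem _ hbS, hr⟩

lemma sepEdges_sdiff_eq {u u' : V} (hadj : T.Adj u u') (S : Set V) :
    sepEdges T (insert u S) \ {s(u, u')} = sepEdges T (insert u' S) \ {s(u, u')} := by
  ext f
  simp only [Set.mem_diff, Set.mem_singleton_iff]
  constructor
  · rintro ⟨hm, hne⟩
    exact ⟨sepEdges_sdiff_aux hadj S hne hm, hne⟩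
  · rintro ⟨hm, hne⟩
    exact ⟨sepEdges_sdiff_aux hadj.symm S (f := f)
      (by rw [Sym2.eq_swap]; exact hne) hm, hne⟩

lemma ncard_split_mem [Finite V] {X : Set (Sym2 V)} {e : Sym2 V} (he : e ∈ X) :
    X.ncard = (X \ {e}).ncard + 1 := by
  have : Finite (Sym2 V) := finite_sym2
  exact (Set.ncard_diff_singleton_add_one he (Set.toFinite _)).symm

lemma ncard_split_not_mem {X : Set (Sym2 V)} {e : Sym2 V} (he : e ∉ X) :
    X.ncard = (X \ {e}).ncard := by
  rw [Set.diff_singleton_eq_self he]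

end Aux

/-- Let `e = {u, u'}` be an edge of a tree `T`.  If `w, w'` lie in the same component
of `T - e`, then for every finite set `I` of vertices,
`d_T({u,w} ∪ I) - d_T({u',w} ∪ I) = d_T({u,w'} ∪ I) - d_T({u',w'} ∪ I)`. -/
theorem stmt5 {V : Type*} [Fintype V] (T : SimpleGraph V) (hT : T.IsTree)
    (u u' : V) (hadj : T.Adj u u')
    (w w' : V) (hww' : (T.deleteEdges {s(u, u')}).Reachable w w')
    (I : Set V) (hIfin : I.Finite) :
    (steinerDist T ({u, w} ∪ I) : ℤ) - (steinerDist T ({u', w} ∪ I) : ℤ)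
      = (steinerDist T ({u, w'} ∪ I) : ℤ) - (steinerDist T ({u', w'} ∪ I) : ℤ) := by
  have hfin1 : (insert w I).Finite := hIfin.insert w
  have hfin2 : (insert w' I).Finite := hIfin.insert w'
  set e : Sym2 V := s(u, u') with he
  set D := T.deleteEdges {e} with hD
  have hrw : ∀ (x y : V), ({x, y} ∪ I : Set V) = insert x (insert y I) := by
    intro x y
    rw [Set.insert_union, Set.singleton_union]
  rw [hrw u w, hrw u' w, hrw u w', hrw u' w']
  rw [steinerDist_eq_sepEdges_ncard hT u hfin1,
    steinerDist_eq_sepEdges_ncard hT u' hfin1,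
    steinerDist_eq_sepEdges_ncard hT u hfin2,
    steinerDist_eq_sepEdges_ncard hT u' hfin2]
  -- key facts
  have hadj' : T.Adj u' u := hadj.symm
  have he' : s(u', u) = e := Sym2.eq_swap
  -- the indicator conditions agree for w and w'
  have hcond : ∀ z : V, (∃ x ∈ insert w I, ¬ D.Reachable z x) ↔
      (∃ x ∈ insert w' I, ¬ D.Reachable z x) := by
    intro z
    constructor
    · rintro ⟨x, hx, hr⟩
      rcases hx with rfl | hx
      · exact ⟨w', Set.mem_insert _ _, fun h => hr (h.trans hww'.symm)⟩
      · exact ⟨x, Set.mem_insert_of_mem _ hx, hr⟩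
    · rintro ⟨x, hx, hr⟩
      rcases hx with rfl | hx
      · exact ⟨w, Set.mem_insert _ _, fun h => hr (h.trans hww')⟩
      · exact ⟨x, Set.mem_insert_of_mem _ hx, hr⟩
  have h1 : e ∈ sepEdges T (insert u (insert w I)) ↔
      e ∈ sepEdges T (insert u (insert w' I)) := by
    rw [edge_mem_sepEdges_iff hT hadj, edge_mem_sepEdges_iff hT hadj]
    exact hcond u
  have h2 : e ∈ sepEdges T (insert u' (insert w I)) ↔
      e ∈ sepEdges T (insert u' (insert w' I)) := by
    rw [show (e : Sym2 V) = s(u', u) from he'.symm]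
    rw [edge_mem_sepEdges_iff hT hadj', edge_mem_sepEdges_iff hT hadj']
    rw [he']
    exact hcond u'
  have hd1 : sepEdges T (insert u (insert w I)) \ {e} =
      sepEdges T (insert u' (insert w I)) \ {e} := sepEdges_sdiff_eq hadj _
  have hd2 : sepEdges T (insert u (insert w' I)) \ {e} =
      sepEdges T (insert u' (insert w' I)) \ {e} := sepEdges_sdiff_eq hadj _
  by_cases p1 : e ∈ sepEdges T (insert u (insert w I)) <;>
    by_cases p2 : e ∈ sepEdges T (insert u' (insert w I))
  · rw [ncard_split_mem p1, ncard_split_mem p2, ncard_split_mem (h1.mp p1),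
      ncard_split_mem (h2.mp p2), hd1, hd2]
    push_cast; ring
  · rw [ncard_split_mem p1, ncard_split_not_mem p2, ncard_split_mem (h1.mp p1),
      ncard_split_not_mem (fun h => p2 (h2.mpr h)), hd1, hd2]
    norm_num
  · rw [ncard_split_not_mem p1, ncard_split_mem p2, ncard_split_not_mem
      (fun h => p1 (h1.mpr h)), ncard_split_mem (h2.mp p2), hd1, hd2]
    push_cast; ring
  · rw [ncard_split_not_mem p1, ncard_split_not_mem p2,
      ncard_split_not_mem (fun h => p1 (h1.mpr h)),
      ncard_split_not_mem (fun h => p2 (h2.mpr h)), hd1, hd2]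
    norm_num
end

section
/- Let T be a tree on vertex set {0,...,n} with n ≥ 1, k ≥ 2 an integer, and e = {u, u+1} an edge of T such that 0,...,u lie in one component of T - e and u+1,...,n lie in the other. Define for each pair of vertices v, w the polynomial S_{v,w}(x) = Σ_{i ∈ {0,...,n}^{k-2}} d_T({v, w} ∪ {i_1,...,i_{k-2}}) x_{i_1}···x_{i_{k-2}}. Then for every w ∈ {0,...,u}, S_{u,w} - S_{u+1,w} = -(Σ_{i=0}^{u} x_i)^{k-2}, and for every w ∈ {u+1,...,n}, S_{u,w} - S_{u+1,w} = (Σ_{i=u+1}^{n} x_i)^{k-2}. -/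
open SimpleGraph MvPolynomial

/-- The polynomial `S_{v,w}(x) = Σ_{i ∈ V^{k-2}} d_G({v,w} ∪ {i_1,…,i_{k-2}}) x_{i_1}⋯x_{i_{k-2}}`. -/
noncomputable def steinerRow {V : Type*} [Fintype V] (G : SimpleGraph V)
    (R : Type*) [CommRing R] (k : ℕ) (v w : V) : MvPolynomial V R :=
  ∑ f : Fin (k - 2) → V,
    (steinerDist G ({v, w} ∪ Set.range f) : MvPolynomial V R) * ∏ j, X (f j)

namespace SteinerAux

variable {V : Type*} [Fintype V] [DecidableEq V] {T : SimpleGraph V}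

set_option linter.unusedSectionVars false

lemma steiner_set_nonempty (T : SimpleGraph V) (hc : T.Connected) (S : Set V) :
    {m | ∃ H : T.Subgraph, H.Connected ∧ S ⊆ H.verts ∧ H.edgeSet.ncard = m}.Nonempty := by
  refine ⟨(⊤ : T.Subgraph).edgeSet.ncard, ⊤, ?_, by simp, rfl⟩
  rw [Subgraph.connected_iff']
  exact (Subgraph.topIso (G := T)).connected_iff.mpr hc

lemma exists_path_edges (hT : T.IsTree) {H : T.Subgraph} (hH : H.Connected)
    {a v : V} (ha : a ∈ H.verts) (hv : v ∈ H.verts) :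
    ∃ p : T.Walk a v, p.IsPath ∧ ∀ e ∈ p.edges, e ∈ H.edgeSet := by
  obtain ⟨q⟩ := hH.coe ⟨a, ha⟩ ⟨v, hv⟩
  refine ⟨((q.map H.hom).toPath.val.copy rfl rfl), by simp [Path.isPath], fun e he => ?_⟩
  erw [SimpleGraph.Walk.edges_copy] at he
  have he' := Walk.edges_toPath_subset _ he
  rw [Walk.edges_map, List.mem_map] at he'
  obtain ⟨d, hd, rfl⟩ := he'
  have hdm := q.edges_subset_edgeSet hd
  induction d using Sym2.ind with
  | _ x y =>
    rw [SimpleGraph.mem_edgeSet] at hdm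
    rw [Sym2.map_pair_eq, Subgraph.mem_edgeSet]
    exact (Subgraph.coe_adj _ _ _).mp hdm

lemma edge_not_mem_of_reach (hT : T.IsTree) {e : Sym2 V} {a v : V}
    (h : (T.deleteEdges {e}).Reachable a v) {p : T.Walk a v} (hp : p.IsPath) :
    e ∉ p.edges := by
  obtain ⟨q⟩ := h
  have hsub : ∀ d ∈ q.toPath.val.edges, d ∈ T.edgeSet := by
    intro d hd
    have := q.toPath.val.edges_subset_edgeSet hd
    rw [edgeSet_deleteEdges] at this
    exact this.1
  have hq' : (q.toPath.val.transfer T hsub).IsPath := (q.toPath.2).transfer _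
  have hpq := (hT.existsUnique_path a v).unique hp hq'
  rw [hpq, Walk.edges_transfer]
  intro hmem
  have := q.toPath.val.edges_subset_edgeSet hmem
  rw [edgeSet_deleteEdges] at this
  exact this.2 rfl

lemma not_reach_del (hT : T.IsTree) {a b : V} (hab : T.Adj a b) :
    ¬ (T.deleteEdges {s(a,b)}).Reachable a b := by
  have h := (isAcyclic_iff_forall_adj_isBridge.1 hT.IsAcyclic) hab
  rw [isBridge_iff] at h
  exact h

lemma mem_support_of_cross (hT : T.IsTree) {a b x y : V} (hab : T.Adj a b)
    (hx : (T.deleteEdges {s(a,b)}).Reachable a x)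
    (hy : (T.deleteEdges {s(a,b)}).Reachable b y)
    (p : T.Walk x y) : a ∈ p.support := by
  by_cases he : s(a,b) ∈ p.edges
  · exact Walk.fst_mem_support_of_mem_edges p he
  · exfalso
    have hsub : ∀ d ∈ p.edges, d ∈ (T.deleteEdges {s(a,b)}).edgeSet := by
      intro d hd
      rw [edgeSet_deleteEdges]
      refine ⟨p.edges_subset_edgeSet hd, ?_⟩
      rw [Set.mem_singleton_iff]
      rintro rfl
      exact he hd
    have hr : (T.deleteEdges {s(a,b)}).Reachable x y := ⟨p.transfer _ hsub⟩
    exact not_reach_del hT hab (hx.trans (hr.trans hy.symm))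

lemma mem_verts_of_cross (hT : T.IsTree) {a b : V} (hab : T.Adj a b)
    {H : T.Subgraph} (hH : H.Connected) {x y : V} (hxv : x ∈ H.verts) (hyv : y ∈ H.verts)
    (hx : (T.deleteEdges {s(a,b)}).Reachable a x)
    (hy : (T.deleteEdges {s(a,b)}).Reachable b y) : a ∈ H.verts := by
  obtain ⟨q⟩ := hH.coe ⟨x, hxv⟩ ⟨y, hyv⟩
  have hsup := mem_support_of_cross hT hab hx hy (q.map H.hom)
  erw [SimpleGraph.Walk.support_map (f := H.hom), List.mem_map] at hsup
  obtain ⟨⟨z, hz⟩, _, rfl⟩ := hsup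
  exact hz

lemma steinerDist_insert_eq (hT : T.IsTree) {a b : V} (hab : T.Adj a b)
    {S : Set V} {x y : V} (hxS : x ∈ S) (hyS : y ∈ S)
    (hx : (T.deleteEdges {s(a,b)}).Reachable a x)
    (hy : (T.deleteEdges {s(a,b)}).Reachable b y) :
    steinerDist T (insert a S) = steinerDist T S := by
  unfold steinerDist
  congr 1
  ext m
  constructor
  · rintro ⟨H, hc, hs, rfl⟩
    exact ⟨H, hc, (Set.subset_insert a S).trans hs, rfl⟩
  · rintro ⟨H, hc, hs, rfl⟩
    refine ⟨H, hc, ?_, rfl⟩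
    rw [Set.insert_subset_iff]
    exact ⟨mem_verts_of_cross hT hab hc (hs hxS) (hs hyS) hx hy, hs⟩

lemma steinerDist_insert_side (hT : T.IsTree) {a b : V} (hab : T.Adj a b)
    {S : Set V} (haS : a ∈ S)
    (hside : ∀ v ∈ S, (T.deleteEdges {s(a,b)}).Reachable a v) :
    steinerDist T (insert b S) = steinerDist T S + 1 := by
  have hne1 := steiner_set_nonempty T hT.isConnected S
  have hne2 := steiner_set_nonempty T hT.isConnected (insert b S)
  refine le_antisymm ?_ ?_
  · -- ≤ : add the edge
    obtain ⟨H, hc, hs, hcard⟩ := Nat.sInf_mem hne1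
    set H' : T.Subgraph := H ⊔ T.subgraphOfAdj hab with hH'
    have hc' : H'.Connected := by
      refine Subgraph.connected_sup hc.preconnected (Subgraph.subgraphOfAdj_connected hab).preconnected ⟨a, ?_⟩
      rw [Subgraph.verts_inf]
      exact ⟨hs haS, by simp⟩
    have hv' : insert b S ⊆ H'.verts := by
      rw [Set.insert_subset_iff, hH', Subgraph.verts_sup]
      exact ⟨Or.inr (by simp), fun z hz => Or.inl (hs hz)⟩
    have hcard' : H'.edgeSet.ncard ≤ steinerDist T S + 1 := by
      rw [hH', Subgraph.edgeSet_sup, edgeSet_subgraphOfAdj]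
      calc (H.edgeSet ∪ {s(a,b)}).ncard ≤ H.edgeSet.ncard + ({s(a,b)} : Set (Sym2 V)).ncard :=
            Set.ncard_union_le _ _
        _ = steinerDist T S + 1 := by rw [hcard, Set.ncard_singleton]; rfl
    exact le_trans (Nat.sInf_le ⟨H', hc', hv', rfl⟩) hcard'
  · -- ≥ : delete the edge and take the component of a
    obtain ⟨H, hc, hs, hcard⟩ := Nat.sInf_mem hne2
    have haH : a ∈ H.verts := hs (Set.mem_insert_of_mem _ haS)
    have hbH : b ∈ H.verts := hs (Set.mem_insert _ _)
    -- the edge is in H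
    have heH : s(a,b) ∈ H.edgeSet := by
      obtain ⟨p, hp, hpe⟩ := exists_path_edges hT hc haH hbH
      have hsingle : p = Walk.cons hab Walk.nil := by
        refine (hT.existsUnique_path a b).unique hp ?_
        simp [Walk.cons_isPath_iff, hab.ne]
      apply hpe
      rw [hsingle]
      simp
    set K : SimpleGraph V := fromEdgeSet (H.edgeSet \ {s(a,b)}) with hK
    have hKadj : ∀ {v w : V}, K.Adj v w → H.Adj v w := by
      intro v w h
      rw [hK, fromEdgeSet_adj] at h
      exact Subgraph.mem_edgeSet.mp h.1.1
    set H'' : T.Subgraph :=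
      { verts := {v | K.Reachable a v}
        Adj := fun v w => K.Adj v w ∧ K.Reachable a v
        adj_sub := fun h => H.adj_sub (hKadj h.1)
        edge_vert := fun h => h.2
        symm := by
          constructor
          rintro v w ⟨h1, h2⟩
          exact ⟨h1.symm, h2.trans h1.reachable⟩ } with hH''
    have hSsub : S ⊆ H''.verts := by
      intro v hv
      obtain ⟨p, hp, hpe⟩ := exists_path_edges hT hc haH (hs (Set.mem_insert_of_mem _ hv))
      have hnot : s(a,b) ∉ p.edges := edge_not_mem_of_reach hT (hside v hv) hp
      have hsub : ∀ d ∈ p.edges, d ∈ K.edgeSet := by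
        intro d hd
        rw [hK, edgeSet_fromEdgeSet]
        refine ⟨⟨hpe d hd, ?_⟩, T.not_isDiag_of_mem_edgeSet (p.edges_subset_edgeSet hd)⟩
        rw [Set.mem_singleton_iff]
        rintro rfl
        exact hnot hd
      exact ⟨p.transfer K hsub⟩
    have haH'' : a ∈ H''.verts := Reachable.refl a
    have hc'' : H''.Connected := by
      have key : ∀ {x y : V} (p : K.Walk x y) (hx : K.Reachable a x) (hy : K.Reachable a y),
          H''.coe.Reachable ⟨x, hx⟩ ⟨y, hy⟩ := by
        intro x y p
        induction p with
        | nil => intro hx hy; exact Reachable.refl _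
        | @cons x z y h q ih =>
          intro hx hy
          have hz : K.Reachable a z := hx.trans h.reachable
          have hadj'' : H''.coe.Adj ⟨x, hx⟩ ⟨z, hz⟩ := ⟨h, hx⟩
          exact (hadj''.reachable).trans (ih hz hy)
      rw [Subgraph.connected_iff', connected_iff_exists_forall_reachable]
      refine ⟨⟨a, haH''⟩, ?_⟩
      rintro ⟨w, hw⟩
      obtain ⟨p⟩ := id hw
      exact key p (Reachable.refl a) hw
    have hEsub : H''.edgeSet ⊆ H.edgeSet \ {s(a,b)} := by
      intro d hd
      induction d using Sym2.ind with
      | _ v w =>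
        rw [Subgraph.mem_edgeSet] at hd
        have := hd.1
        rw [hK, fromEdgeSet_adj] at this
        exact this.1
    have h1 : steinerDist T S ≤ H''.edgeSet.ncard := Nat.sInf_le ⟨H'', hc'', hSsub, rfl⟩
    have h2 : H''.edgeSet.ncard ≤ (H.edgeSet \ {s(a,b)}).ncard :=
      Set.ncard_le_ncard hEsub (Set.toFinite _)
    have h3 : (H.edgeSet \ {s(a,b)}).ncard + 1 = H.edgeSet.ncard :=
      Set.ncard_diff_singleton_add_one heH (Set.toFinite _)
    have hcard2 : H.edgeSet.ncard = steinerDist T (insert b S) := hcard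
    omega

end SteinerAux


open SteinerAux Finset in
/-- Graham–Pollak-type row difference identity for Steiner distance hypermatrices of trees. -/
theorem stmt6 (n k : ℕ) (hn : 1 ≤ n) (hk : 2 ≤ k) (R : Type*) [CommRing R]
    (T : SimpleGraph (Fin (n + 1))) (hT : T.IsTree)
    (u u' : Fin (n + 1)) (huu' : (u' : ℕ) = (u : ℕ) + 1) (hadj : T.Adj u u')
    (hcomp : ∀ i : Fin (n + 1),
      (i ≤ u → (T.deleteEdges {s(u, u')}).Reachable u i) ∧
      (u < i → (T.deleteEdges {s(u, u')}).Reachable u' i)) :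
    (∀ w : Fin (n + 1), w ≤ u →
      steinerRow T R k u w - steinerRow T R k u' w
        = -(∑ i ∈ Finset.univ.filter (· ≤ u), (X i : MvPolynomial (Fin (n + 1)) R)) ^ (k - 2)) ∧
    (∀ w : Fin (n + 1), u < w →
      steinerRow T R k u w - steinerRow T R k u' w
        = (∑ i ∈ Finset.univ.filter (u < ·), (X i : MvPolynomial (Fin (n + 1)) R)) ^ (k - 2)) := by
  classical
  set m := k - 2 with hm
  have hswap : s(u', u) = s(u, u') := Sym2.eq_swap
  have hRu : ∀ v, v ≤ u → (T.deleteEdges {s(u, u')}).Reachable u v := fun v hv => (hcomp v).1 hv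
  have hRu' : ∀ v, u < v → (T.deleteEdges {s(u, u')}).Reachable u' v := fun v hv => (hcomp v).2 hv
  have hRuS : ∀ v, v ≤ u → (T.deleteEdges {s(u', u)}).Reachable u v := by
    rw [hswap]; exact hRu
  have hRu'S : ∀ v, u < v → (T.deleteEdges {s(u', u)}).Reachable u' v := by
    rw [hswap]; exact hRu'
  have rowsub : ∀ (w : Fin (n + 1)) (c : (Fin m → Fin (n + 1)) → MvPolynomial (Fin (n + 1)) R),
      (∀ f : Fin m → Fin (n + 1),
        ((steinerDist T ({u, w} ∪ Set.range f) : MvPolynomial (Fin (n + 1)) R)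
          - (steinerDist T ({u', w} ∪ Set.range f) : MvPolynomial (Fin (n + 1)) R)) = c f) →
      steinerRow T R k u w - steinerRow T R k u' w
        = ∑ f : Fin m → Fin (n + 1), c f * ∏ j, X (f j) := by
    intro w c hc
    unfold steinerRow
    rw [← Finset.sum_sub_distrib]
    refine Finset.sum_congr rfl fun f _ => ?_
    rw [← sub_mul, hc f]
  have sumL : ∀ s : Finset (Fin (n + 1)),
      (∑ f : Fin m → Fin (n + 1),
        (if (∀ j, f j ∈ s) then (1 : MvPolynomial (Fin (n + 1)) R) else 0) * ∏ j, X (f j))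
      = (∑ i ∈ s, (X i : MvPolynomial (Fin (n + 1)) R)) ^ m := by
    intro s
    have h1 : (∑ i ∈ s, (X i : MvPolynomial (Fin (n + 1)) R)) ^ m
        = ∑ f ∈ Fintype.piFinset (fun _ : Fin m => s),
            ∏ j, (X (f j) : MvPolynomial (Fin (n + 1)) R) := by
      rw [← Finset.prod_univ_sum (fun _ : Fin m => s)
        (fun _ i => (X i : MvPolynomial (Fin (n + 1)) R))]
      rw [Finset.prod_const, Finset.card_univ, Fintype.card_fin]
    have h2 : Fintype.piFinset (fun _ : Fin m => s)
        = Finset.univ.filter (fun f : Fin m → Fin (n + 1) => ∀ j, f j ∈ s) := by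
      ext f
      simp [Fintype.mem_piFinset]
    rw [h1, h2, Finset.sum_filter]
    refine Finset.sum_congr rfl fun f _ => ?_
    split <;> simp
  have key1 : ∀ w : Fin (n + 1), w ≤ u → ∀ f : Fin m → Fin (n + 1),
      ((steinerDist T ({u, w} ∪ Set.range f) : MvPolynomial (Fin (n + 1)) R)
        - (steinerDist T ({u', w} ∪ Set.range f) : MvPolynomial (Fin (n + 1)) R))
      = if ∀ j, f j ≤ u then -1 else 0 := by
    intro w hw f
    have hset : insert u ({u', w} ∪ Set.range f) = insert u' ({u, w} ∪ Set.range f) := by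
      ext z
      simp only [Set.mem_insert_iff, Set.mem_union, Set.mem_singleton_iff]
      tauto
    have h2 : steinerDist T (insert u ({u', w} ∪ Set.range f))
        = steinerDist T ({u', w} ∪ Set.range f) :=
      steinerDist_insert_eq hT hadj (x := w) (y := u') (by simp) (by simp)
        (hRu w hw) (Reachable.refl u')
    by_cases hf : ∀ j, f j ≤ u
    · rw [if_pos hf]
      have h1 : steinerDist T (insert u' ({u, w} ∪ Set.range f))
          = steinerDist T ({u, w} ∪ Set.range f) + 1 := by
        refine steinerDist_insert_side hT hadj (by simp) ?_
        rintro v hv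
        rcases hv with (rfl | rfl) | ⟨j, rfl⟩
        · exact Reachable.refl _
        · exact hRu _ hw
        · exact hRu _ (hf j)
      rw [← h2, hset, h1]
      push_cast
      ring
    · rw [if_neg hf]
      push_neg at hf
      obtain ⟨j0, hj0⟩ := hf
      have hj0' : u < f j0 := hj0
      have h1 : steinerDist T (insert u' ({u, w} ∪ Set.range f))
          = steinerDist T ({u, w} ∪ Set.range f) := by
        refine steinerDist_insert_eq hT hadj.symm (x := f j0) (y := u) ?_ ?_ ?_ ?_
        · exact Set.mem_union_right _ ⟨j0, rfl⟩
        · exact Set.mem_union_left _ (Or.inl rfl)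
        · exact hRu'S _ hj0'
        · exact hRuS u le_rfl
      rw [← h1, ← h2, hset, sub_self]
  have key2 : ∀ w : Fin (n + 1), u < w → ∀ f : Fin m → Fin (n + 1),
      ((steinerDist T ({u, w} ∪ Set.range f) : MvPolynomial (Fin (n + 1)) R)
        - (steinerDist T ({u', w} ∪ Set.range f) : MvPolynomial (Fin (n + 1)) R))
      = if ∀ j, u < f j then 1 else 0 := by
    intro w hw f
    have hset : insert u' ({u, w} ∪ Set.range f) = insert u ({u', w} ∪ Set.range f) := by
      ext z
      simp only [Set.mem_insert_iff, Set.mem_union, Set.mem_singleton_iff]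
      tauto
    have h2 : steinerDist T (insert u' ({u, w} ∪ Set.range f))
        = steinerDist T ({u, w} ∪ Set.range f) := by
      refine steinerDist_insert_eq hT hadj.symm (x := w) (y := u) ?_ ?_ ?_ ?_
      · exact Set.mem_union_left _ (Or.inr rfl)
      · exact Set.mem_union_left _ (Or.inl rfl)
      · exact hRu'S w hw
      · exact hRuS u le_rfl
    by_cases hf : ∀ j, u < f j
    · rw [if_pos hf]
      have h1 : steinerDist T (insert u ({u', w} ∪ Set.range f))
          = steinerDist T ({u', w} ∪ Set.range f) + 1 := by
        refine steinerDist_insert_side hT hadj.symm (by simp) ?_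
        rintro v hv
        rcases hv with (rfl | rfl) | ⟨j, rfl⟩
        · exact Reachable.refl _
        · exact hRu'S _ hw
        · exact hRu'S _ (hf j)
      rw [← h2, hset, h1]
      push_cast
      ring
    · rw [if_neg hf]
      push_neg at hf
      obtain ⟨j0, hj0⟩ := hf
      have hj0' : f j0 ≤ u := hj0
      have h1 : steinerDist T (insert u ({u', w} ∪ Set.range f))
          = steinerDist T ({u', w} ∪ Set.range f) :=
        steinerDist_insert_eq hT hadj (x := f j0) (y := w)
          (Set.mem_union_right _ ⟨j0, rfl⟩) (Set.mem_union_left _ (Or.inr rfl))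
          (hRu _ hj0') (hRu' w hw)
      rw [← h1, ← h2, hset, sub_self]
  constructor
  · intro w hw
    rw [rowsub w _ (key1 w hw)]
    have hterm : ∀ f : Fin m → Fin (n + 1),
        ((if ∀ j, f j ≤ u then (-1 : MvPolynomial (Fin (n + 1)) R) else 0) * ∏ j, X (f j))
        = -((if ∀ j, f j ∈ Finset.univ.filter (· ≤ u) then (1 : MvPolynomial (Fin (n + 1)) R)
              else 0) * ∏ j, X (f j)) := by
      intro f
      simp only [Finset.mem_filter, Finset.mem_univ, true_and]
      split <;> simp
    rw [Finset.sum_congr rfl fun f _ => hterm f, Finset.sum_neg_distrib, sumL]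
  · intro w hw
    rw [rowsub w _ (key2 w hw)]
    have hterm : ∀ f : Fin m → Fin (n + 1),
        ((if ∀ j, u < f j then (1 : MvPolynomial (Fin (n + 1)) R) else 0) * ∏ j, X (f j))
        = ((if ∀ j, f j ∈ Finset.univ.filter (u < ·) then (1 : MvPolynomial (Fin (n + 1)) R)
              else 0) * ∏ j, X (f j)) := by
      intro f
      simp only [Finset.mem_filter, Finset.mem_univ, true_and]
    rw [Finset.sum_congr rfl fun f _ => hterm f, sumL]
end

section
/- For the tree T on 2 vertices {0,1} with one edge, and k ≥ 2 even, if x ∈ ℂ^2 satisfies both partial derivatives of the Steiner k-form p_T vanishing at x, then x = 0. (Concretely, p_T(x_0,x_1) = Σ over k-tuples in {0,1}^k of d_T of the underlying set times the monomial, where d_T(S) = 1 if S = {0,1} and 0 otherwise; so p_T(x_0,x_1) = (x_0+x_1)^k - x_0^k - x_1^k.) -/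
open SimpleGraph MvPolynomial

/-- The Steiner `k`-form of `G`: `p_G(x) = Σ_{(v_1,…,v_k)} d_G({v_1,…,v_k}) x_{v_1}⋯x_{v_k}`,
summed over all `k`-tuples of vertices. -/
noncomputable def steinerForm {V : Type*} [Fintype V] (G : SimpleGraph V) (k : ℕ) :
    MvPolynomial V ℂ :=
  ∑ f : Fin k → V, (steinerDist G (Set.range f) : MvPolynomial V ℂ) * ∏ j, X (f j)

/-- A Steiner nullvector: a common zero of all partial derivatives of the Steiner `k`-form. -/
def IsSteinerNullvector {V : Type*} [Fintype V] (G : SimpleGraph V) (k : ℕ) (x : V → ℂ) : Prop :=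
  ∀ j : V, MvPolynomial.eval x (MvPolynomial.pderiv j (steinerForm G k)) = 0

lemma steinerDist_singleton' {V : Type*} (G : SimpleGraph V) (v : V) :
    steinerDist G {v} = 0 := by
  apply Nat.sInf_eq_zero.2
  left
  exact ⟨G.singletonSubgraph v, SimpleGraph.Subgraph.singletonSubgraph_connected,
    by simp, by simp [SimpleGraph.edgeSet_singletonSubgraph]⟩

lemma steinerDist_univ' : steinerDist (⊤ : SimpleGraph (Fin 2)) Set.univ = 1 := by
  have hadj : (⊤ : SimpleGraph (Fin 2)).Adj 0 1 := by simp
  have h1 : 1 ∈ {m | ∃ H : (⊤ : SimpleGraph (Fin 2)).Subgraph,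
      H.Connected ∧ Set.univ ⊆ H.verts ∧ H.edgeSet.ncard = m} := by
    refine ⟨(⊤ : SimpleGraph (Fin 2)).subgraphOfAdj hadj,
      SimpleGraph.Subgraph.subgraphOfAdj_connected hadj, ?_, ?_⟩
    · intro v _; fin_cases v <;> simp
    · rw [SimpleGraph.edgeSet_subgraphOfAdj]; simp
  have h0 : 0 ∉ {m | ∃ H : (⊤ : SimpleGraph (Fin 2)).Subgraph,
      H.Connected ∧ Set.univ ⊆ H.verts ∧ H.edgeSet.ncard = m} := by
    rintro ⟨H, hc, hs, he⟩
    have hemp : H.edgeSet = ∅ := (Set.ncard_eq_zero (Set.toFinite _)).1 he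
    have h0v : (0 : Fin 2) ∈ H.verts := hs trivial
    have h1v : (1 : Fin 2) ∈ H.verts := hs trivial
    obtain ⟨w⟩ := hc ⟨0, h0v⟩ ⟨1, h1v⟩
    cases w with
    | @cons _ b _ h p =>
      have hadj' : H.Adj 0 ↑b := h
      have hmem : s(0, (b : Fin 2)) ∈ H.edgeSet := hadj'
      rw [hemp] at hmem
      exact hmem
  unfold steinerDist
  refine le_antisymm (Nat.sInf_le h1) ?_
  rcases Nat.eq_zero_or_pos (sInf {m | ∃ H : (⊤ : SimpleGraph (Fin 2)).Subgraph,
      H.Connected ∧ Set.univ ⊆ H.verts ∧ H.edgeSet.ncard = m}) with hz | hp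
  · exact absurd (hz ▸ Nat.sInf_mem ⟨1, h1⟩) h0
  · exact hp

lemma steinerForm_eq' (k : ℕ) (hk2 : 2 ≤ k) :
    steinerForm (⊤ : SimpleGraph (Fin 2)) k
      = (X 0 + X 1) ^ k - X 0 ^ k - X 1 ^ k := by
  haveI : Nonempty (Fin k) := ⟨⟨0, by omega⟩⟩
  classical
  have hsum : ∑ f : Fin k → Fin 2, ∏ j, (X (f j) : MvPolynomial (Fin 2) ℂ)
      = (X 0 + X 1) ^ k := by
    calc ∑ f : Fin k → Fin 2, ∏ j, (X (f j) : MvPolynomial (Fin 2) ℂ)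
        = ∑ f ∈ Fintype.piFinset (fun _ : Fin k => (Finset.univ : Finset (Fin 2))),
            ∏ j, (X (f j) : MvPolynomial (Fin 2) ℂ) := by rw [Fintype.piFinset_univ]
      _ = ∏ _j : Fin k, ∑ v : Fin 2, (X v : MvPolynomial (Fin 2) ℂ) :=
          (Finset.prod_univ_sum _ _).symm
      _ = (X 0 + X 1) ^ k := by
          simp [Fin.sum_univ_two, Finset.prod_const, Finset.card_univ]
  have hne : (fun _ : Fin k => (0 : Fin 2)) ≠ (fun _ => 1) := by
    intro h
    have := congrFun h (Classical.arbitrary (Fin k))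
    simp at this
  have key : ∀ f : Fin k → Fin 2,
      (steinerDist ⊤ (Set.range f) : MvPolynomial (Fin 2) ℂ) * ∏ j, X (f j)
        = ∏ j, X (f j) -
          (if f ∈ ({(fun _ => 0), (fun _ => 1)} : Finset (Fin k → Fin 2))
            then ∏ j, (X (f j) : MvPolynomial (Fin 2) ℂ) else 0) := by
    intro f
    by_cases h0 : f = fun _ => 0
    · subst h0
      simp [Set.range_const, steinerDist_singleton']
    by_cases h1 : f = fun _ => 1
    · subst h1
      simp [Set.range_const, steinerDist_singleton']
    · have hfin2 : ∀ y : Fin 2, y ≠ 0 → y = 1 := by decide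
      have hfin2' : ∀ y : Fin 2, y ≠ 1 → y = 0 := by decide
      have hx0 : ∃ i, f i = 0 := by
        by_contra hc
        push_neg at hc
        exact h1 (funext fun i => hfin2 (f i) (hc i))
      have hx1 : ∃ i, f i = 1 := by
        by_contra hc
        push_neg at hc
        exact h0 (funext fun i => hfin2' (f i) (hc i))
      have hr : Set.range f = Set.univ := by
        rw [Set.range_eq_univ]
        intro v
        fin_cases v
        · exact hx0
        · exact hx1
      rw [hr, steinerDist_univ']
      simp [h0, h1]
  rw [steinerForm]
  simp_rw [key]
  rw [Finset.sum_sub_distrib, hsum]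
  have : ∑ f : Fin k → Fin 2,
      (if f ∈ ({(fun _ => 0), (fun _ => 1)} : Finset (Fin k → Fin 2))
        then ∏ j, (X (f j) : MvPolynomial (Fin 2) ℂ) else 0)
      = (X 0 : MvPolynomial (Fin 2) ℂ) ^ k + X 1 ^ k := by
    rw [Finset.sum_ite_mem, Finset.univ_inter, Finset.sum_pair hne]
    simp [Finset.prod_const, Finset.card_univ]
  rw [this]
  ring

lemma auxR' (m : ℕ) (hm0 : m ≠ 0) (x : ℝ) (hx : 0 ≤ x) (hxm : x ^ m = 1) : x = 1 := by
  rcases lt_trichotomy x 1 with h | h | h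
  · have := pow_lt_one₀ hx h hm0; linarith
  · exact h
  · have := one_lt_pow₀ h hm0; linarith

lemma auxC' (m : ℕ) (hm : Odd m) (a b : ℂ) (ha : (a + b) ^ m = a ^ m)
    (hb : (a + b) ^ m = b ^ m) : a = 0 ∧ b = 0 := by
  have hm0 : m ≠ 0 := by rintro rfl; simp at hm
  by_cases h0 : a = 0
  · subst h0
    refine ⟨rfl, ?_⟩
    have : b ^ m = 0 := by rw [← zero_add b, ha, zero_pow hm0]
    exact pow_eq_zero_iff hm0 |>.1 this
  by_cases hb0 : b = 0
  · subst hb0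
    refine ⟨?_, rfl⟩
    have : a ^ m = 0 := by rw [← add_zero a, hb, zero_pow hm0]
    exact pow_eq_zero_iff hm0 |>.1 this
  exfalso
  set t : ℂ := b / a with htdef
  have ht : t ^ m = 1 := by
    rw [div_pow, ← hb, ha, div_self (pow_ne_zero _ h0)]
  have hs : (1 + t) ^ m = 1 := by
    have h1t : 1 + t = (a + b) / a := by rw [htdef]; field_simp
    rw [h1t, div_pow, ha, div_self (pow_ne_zero _ h0)]
  have habs : ‖t‖ = 1 :=
    auxR' m hm0 _ (norm_nonneg t) (by rw [← norm_pow, ht, norm_one])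
  have habs' : ‖1 + t‖ = 1 :=
    auxR' m hm0 _ (norm_nonneg _) (by rw [← norm_pow, hs, norm_one])
  have h1 : t * (starRingEnd ℂ) t = 1 := by
    rw [Complex.mul_conj, ← Complex.sq_norm, habs]; norm_num
  have h2 : (1 + t) * (1 + (starRingEnd ℂ) t) = 1 := by
    have h := Complex.mul_conj (1 + t)
    rw [map_add, map_one] at h
    rw [h, ← Complex.sq_norm, habs']; norm_num
  have h3 : t ^ 2 + t + 1 = 0 := by linear_combination t * h2 - (1 + t) * h1
  have h4 : (1 + t : ℂ) = -t ^ 2 := by linear_combination h3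
  have h5 : (1 + t) ^ m = -1 := by
    rw [h4, hm.neg_pow, ← pow_mul, mul_comm, pow_mul, ht, one_pow]
  rw [hs] at h5
  norm_num at h5

/-- For the tree on 2 vertices (one edge) and `k ≥ 2` even, the Steiner `k`-form is
`(x_0 + x_1)^k - x_0^k - x_1^k`, and the only Steiner nullvector is `0`. -/
theorem stmt12 (k : ℕ) (hk : Even k) (hk2 : 2 ≤ k) :
    steinerForm (⊤ : SimpleGraph (Fin 2)) k
      = (X 0 + X 1) ^ k - X 0 ^ k - X 1 ^ k ∧
    ∀ x : Fin 2 → ℂ, IsSteinerNullvector (⊤ : SimpleGraph (Fin 2)) k x → x = 0 := by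
  have hform := steinerForm_eq' k hk2
  refine ⟨hform, ?_⟩
  intro x hx
  have hk0 : (k : ℂ) ≠ 0 := Nat.cast_ne_zero.2 (by omega)
  have h0 := hx 0
  have h1 := hx 1
  rw [hform] at h0 h1
  simp [pderiv_pow, pderiv_X] at h0 h1
  rw [sub_eq_zero] at h0 h1
  have e0 : (x 0 + x 1) ^ (k - 1) = x 0 ^ (k - 1) := mul_left_cancel₀ hk0 h0
  have e1 : (x 0 + x 1) ^ (k - 1) = x 1 ^ (k - 1) := mul_left_cancel₀ hk0 h1
  have hodd : Odd (k - 1) := Nat.Even.sub_odd (by omega) hk odd_one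
  obtain ⟨hx0, hx1⟩ := auxC' (k - 1) hodd (x 0) (x 1) e0 e1
  funext i
  fin_cases i
  · exact hx0
  · exact hx1
end

section
/- Let k ≥ 2 be even and p(x_0, x_1) = (x_0 + x_1)^k - x_0^k - x_1^k ∈ ℂ[x_0, x_1]. Then the only common zero of ∂p/∂x_0 and ∂p/∂x_1 in ℂ^2 is (0,0). -/
open MvPolynomial

lemma stmt13_absone (n : ℕ) (hn0 : n ≠ 0) (z : ℂ) (h1 : z ^ n = 1) : ‖z‖ = 1 := by
  have h : ‖z‖ ^ n = 1 := by
    have := congrArg norm h1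
    rwa [norm_pow, norm_one] at this
  rcases lt_trichotomy ‖z‖ 1 with h' | h' | h'
  · have := pow_lt_one₀ (norm_nonneg z) h' hn0; linarith
  · exact h'
  · have := one_lt_pow₀ h' hn0; linarith

lemma stmt13_key (n : ℕ) (hn : Odd n) (z : ℂ) (h1 : z ^ n = 1) (h2 : (1 + z) ^ n = 1) :
    False := by
  have hn0 : n ≠ 0 := by rintro rfl; simp at hn
  have ha : ‖z‖ = 1 := stmt13_absone n hn0 z h1
  have hb : ‖1 + z‖ = 1 := stmt13_absone n hn0 _ h2
  have hns : Complex.normSq z = 1 := by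
    rw [← Complex.sq_norm, ha]; norm_num
  have hns2 : Complex.normSq (1 + z) = 1 := by
    rw [← Complex.sq_norm, hb]; norm_num
  have hre : z.re = -1/2 := by
    simp [Complex.normSq_apply, Complex.add_re, Complex.add_im] at hns hns2
    nlinarith
  have him : z.im ^ 2 = 3/4 := by
    simp [Complex.normSq_apply] at hns
    nlinarith
  have hzsq : z ^ 2 = -1 - z := by
    apply Complex.ext
    · simp [pow_two, Complex.mul_re, hre]; nlinarith
    · simp [pow_two, Complex.mul_im, hre]; ring
  have h1z : 1 + z = -z ^ 2 := by rw [hzsq]; ring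
  have : (1 + z) ^ n = -1 := by
    rw [h1z, neg_pow, Odd.neg_one_pow hn, ← pow_mul, mul_comm 2 n, pow_mul, h1]
    norm_num
  rw [h2] at this
  norm_num at this

/-- For even `k ≥ 2` and `p = (x_0 + x_1)^k - x_0^k - x_1^k` over `ℂ`, the only common
zero of `∂p/∂x_0` and `∂p/∂x_1` in `ℂ²` is `(0, 0)`. -/
theorem stmt13 (k : ℕ) (hk : Even k) (hk2 : 2 ≤ k)
    (p : MvPolynomial (Fin 2) ℂ) (hp : p = (X 0 + X 1) ^ k - X 0 ^ k - X 1 ^ k)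
    (x : Fin 2 → ℂ)
    (h0 : MvPolynomial.eval x (MvPolynomial.pderiv 0 p) = 0)
    (h1 : MvPolynomial.eval x (MvPolynomial.pderiv 1 p) = 0) :
    x = 0 := by
  subst hp
  set a := x 0 with ha
  set b := x 1 with hb
  set n := k - 1 with hn
  have hkn : Odd n := by
    rcases hk with ⟨m, rfl⟩
    have : n = 2 * m - 1 := by omega
    exact this ▸ ⟨m - 1, by omega⟩
  have hk0 : (k : ℂ) ≠ 0 := by
    exact Nat.cast_ne_zero.mpr (by omega)
  have e0 : MvPolynomial.eval x (MvPolynomial.pderiv 0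
      ((X 0 + X 1) ^ k - X 0 ^ k - X 1 ^ k : MvPolynomial (Fin 2) ℂ)) =
      k * (a + b) ^ n - k * a ^ n := by
    simp [pderiv_pow, Pi.single_apply, ← ha, ← hb, hn]
  have e1 : MvPolynomial.eval x (MvPolynomial.pderiv 1
      ((X 0 + X 1) ^ k - X 0 ^ k - X 1 ^ k : MvPolynomial (Fin 2) ℂ)) =
      k * (a + b) ^ n - k * b ^ n := by
    simp [pderiv_pow, Pi.single_apply, ← ha, ← hb, hn]
  rw [e0] at h0
  rw [e1] at h1
  have hA : (a + b) ^ n = a ^ n := by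
    have := sub_eq_zero.mp h0
    exact mul_left_cancel₀ hk0 this
  have hB : (a + b) ^ n = b ^ n := by
    have := sub_eq_zero.mp h1
    exact mul_left_cancel₀ hk0 this
  have ha0 : a = 0 := by
    by_contra hane
    have hz1 : (b / a) ^ n = 1 := by
      rw [div_pow, ← hB, hA, div_self (pow_ne_zero n hane)]
    have hz2 : (1 + b / a) ^ n = 1 := by
      have : 1 + b / a = (a + b) / a := by field_simp
      rw [this, div_pow, hA, div_self (pow_ne_zero n hane)]
    exact stmt13_key n hkn _ hz1 hz2
  have hb0 : b = 0 := by
    have hn0 : n ≠ 0 := by omega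
    have : b ^ n = 0 := by
      rw [← hB, hA, ha0, zero_pow hn0]
    exact pow_eq_zero_iff hn0 |>.mp this
  funext i
  fin_cases i
  · exact ha0
  · exact hb0
end

section
/- Let k ≥ 3 be odd and p(x_0, x_1, x_2) the Steiner k-form of the path on 3 vertices 0-1-2 (summing over all k-tuples of vertices the Steiner distance of the underlying set times the monomial). Then there exists a nonzero x ∈ ℂ^3 with ∇p(x) = 0. -/
open SimpleGraph MvPolynomial

noncomputable abbrev pathG : SimpleGraph (Fin 3) :=
  SimpleGraph.fromEdgeSet {s((0 : Fin 3), 1), s(1, 2)}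

lemma pathG_edgeSet : pathG.edgeSet = {s((0:Fin 3),1), s(1,2)} := by
  rw [edgeSet_fromEdgeSet]
  ext e
  simp only [Set.mem_diff, Set.mem_insert_iff, Set.mem_singleton_iff, Set.mem_setOf_eq,
    and_iff_left_iff_imp]
  rintro (rfl | rfl) <;> simp [Sym2.mk_isDiag_iff]

lemma pathG_adj01 : pathG.Adj 0 1 := by
  rw [fromEdgeSet_adj]; exact ⟨Or.inl rfl, by decide⟩

lemma pathG_adj12 : pathG.Adj 1 2 := by
  rw [fromEdgeSet_adj]; exact ⟨Or.inr rfl, by decide⟩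

lemma pathG_adj_zero {w : Fin 3} (h : pathG.Adj 0 w) : w = 1 := by
  rw [fromEdgeSet_adj] at h
  rcases h with ⟨h | h, hne⟩ <;>
    rcases Sym2.eq_iff.mp h with ⟨h1, h2⟩ | ⟨h1, h2⟩ <;> first
      | exact h2
      | exact absurd h1 (by decide)
      | exact absurd h2 (by decide)

lemma pathG_adj_two {w : Fin 3} (h : pathG.Adj 2 w) : w = 1 := by
  rw [fromEdgeSet_adj] at h
  rcases h with ⟨h | h, hne⟩ <;>
    rcases Sym2.eq_iff.mp h with ⟨h1, h2⟩ | ⟨h1, h2⟩ <;> first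
      | exact h2
      | exact absurd h1 (by decide)
      | exact absurd h2 (by decide)
      | exact absurd h1.symm hne

lemma sym2_ne : s((0:Fin 3),1) ≠ s(2,1) := by
  intro h
  rcases Sym2.eq_iff.mp h with ⟨h1, -⟩ | ⟨h1, -⟩ <;> exact absurd h1 (by decide)

lemma exists_adj_of_connected (H : pathG.Subgraph) (hc : H.Connected) {u v : Fin 3}
    (hu : u ∈ H.verts) (hv : v ∈ H.verts) (hne : u ≠ v) : ∃ w, H.Adj u w := by
  obtain ⟨p⟩ := hc ⟨u, hu⟩ ⟨v, hv⟩
  cases p with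
  | nil => exact absurd rfl hne
  | cons h _ => exact ⟨_, (Subgraph.coe_adj _ _ _).mp h⟩

lemma steinerDist_singleton (v : Fin 3) : steinerDist pathG {v} = 0 :=
  Nat.sInf_eq_zero.mpr <| Or.inl
    ⟨SimpleGraph.singletonSubgraph pathG v, Subgraph.singletonSubgraph_connected,
      by simp [singletonSubgraph_verts], by simp [edgeSet_singletonSubgraph]⟩

lemma steinerDist_pair {u v : Fin 3} (h : pathG.Adj u v) : steinerDist pathG {u, v} = 1 := by
  apply le_antisymm
  · exact Nat.sInf_le ⟨pathG.subgraphOfAdj h, Subgraph.subgraphOfAdj_connected h, by simp,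
      by rw [edgeSet_subgraphOfAdj]; exact Set.ncard_singleton _⟩
  · refine le_csInf ⟨1, pathG.subgraphOfAdj h, Subgraph.subgraphOfAdj_connected h, by simp,
      by rw [edgeSet_subgraphOfAdj]; exact Set.ncard_singleton _⟩ ?_
    rintro m ⟨H, hc, hS, rfl⟩
    obtain ⟨w, hw⟩ := exists_adj_of_connected H hc (hS (by simp)) (hS (by simp)) h.ne
    exact (Set.ncard_pos (Set.toFinite _)).mpr ⟨s(u, w), hw⟩

lemma steinerDist_two {S : Set (Fin 3)} (h0 : 0 ∈ S) (h2 : 2 ∈ S) :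
    steinerDist pathG S = 2 := by
  have hmem : 2 ∈ {m | ∃ H : pathG.Subgraph,
      H.Connected ∧ S ⊆ H.verts ∧ H.edgeSet.ncard = m} := by
    refine ⟨pathG.subgraphOfAdj pathG_adj01 ⊔ pathG.subgraphOfAdj pathG_adj12,
      Subgraph.connected_sup (Subgraph.subgraphOfAdj_connected pathG_adj01).preconnected (Subgraph.subgraphOfAdj_connected pathG_adj12).preconnected
        ⟨1, by simp⟩, ?_, ?_⟩
    · intro v _
      rw [Subgraph.verts_sup, subgraphOfAdj_verts, subgraphOfAdj_verts]
      fin_cases v <;> simp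
    · rw [Subgraph.edgeSet_sup, edgeSet_subgraphOfAdj, edgeSet_subgraphOfAdj,
        Set.singleton_union]
      refine Set.ncard_pair ?_
      intro h
      rcases Sym2.eq_iff.mp h with ⟨h1, -⟩ | ⟨h1, -⟩ <;> exact absurd h1 (by decide)
  apply le_antisymm (Nat.sInf_le hmem)
  refine le_csInf ⟨2, hmem⟩ ?_
  rintro m ⟨H, hc, hS, rfl⟩
  obtain ⟨w0, hw0⟩ := exists_adj_of_connected H hc (hS h0) (hS h2) (by decide)
  obtain ⟨w2, hw2⟩ := exists_adj_of_connected H hc (hS h2) (hS h0) (by decide)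
  have e0 : s((0:Fin 3), 1) ∈ H.edgeSet := by
    have := pathG_adj_zero (H.adj_sub hw0); subst this; exact hw0
  have e2 : s((2:Fin 3), 1) ∈ H.edgeSet := by
    have := pathG_adj_two (H.adj_sub hw2); subst this; exact hw2
  calc 2 = ({s((0:Fin 3),1), s(2,1)} : Set (Sym2 (Fin 3))).ncard :=
        (Set.ncard_pair sym2_ne).symm
    _ ≤ H.edgeSet.ncard := Set.ncard_le_ncard (by
        intro e he
        rcases he with rfl | rfl
        · exact e0
        · exact e2) (Set.toFinite _)

noncomputable def a01 : Fin 3 → MvPolynomial (Fin 3) ℂ := fun v => if v = 2 then 0 else 1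
noncomputable def a12 : Fin 3 → MvPolynomial (Fin 3) ℂ := fun v => if v = 0 then 0 else 1
noncomputable def a0 : Fin 3 → MvPolynomial (Fin 3) ℂ := fun v => if v = 0 then 1 else 0
noncomputable def a2 : Fin 3 → MvPolynomial (Fin 3) ℂ := fun v => if v = 2 then 1 else 0


lemma prod_a01_one {k : ℕ} {f : Fin k → Fin 3} (h2 : ¬∃ j, f j = 2) :
    (∏ j, a01 (f j)) = 1 :=
  Finset.prod_eq_one fun j _ => by simp only [a01, if_neg (fun h => h2 ⟨j, h⟩)]

lemma prod_a12_one {k : ℕ} {f : Fin k → Fin 3} (h0 : ¬∃ j, f j = 0) :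
    (∏ j, a12 (f j)) = 1 :=
  Finset.prod_eq_one fun j _ => by simp only [a12, if_neg (fun h => h0 ⟨j, h⟩)]

lemma key {k : ℕ} (hk : k ≠ 0) (f : Fin k → Fin 3) :
    (steinerDist pathG (Set.range f) : MvPolynomial (Fin 3) ℂ) =
      2 - (∏ j, a01 (f j)) - (∏ j, a12 (f j)) - (∏ j, a0 (f j)) - (∏ j, a2 (f j)) := by
  have fin3 : ∀ w : Fin 3, w = 0 ∨ w = 1 ∨ w = 2 := by decide
  by_cases h0 : ∃ j, f j = 0 <;> by_cases h1 : ∃ j, f j = 1 <;> by_cases h2 : ∃ j, f j = 2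
  · -- 0, 1, 2
    obtain ⟨j0, hj0⟩ := h0; obtain ⟨j1, hj1⟩ := h1; obtain ⟨j2, hj2⟩ := h2
    rw [steinerDist_two (S := Set.range f) ⟨j0, hj0⟩ ⟨j2, hj2⟩,
      Finset.prod_eq_zero (Finset.mem_univ j2) (by simp [a01, hj2]),
      Finset.prod_eq_zero (Finset.mem_univ j0) (by simp [a12, hj0]),
      Finset.prod_eq_zero (Finset.mem_univ j1) (by simp [a0, hj1]),
      Finset.prod_eq_zero (Finset.mem_univ j1) (by simp [a2, hj1])]
    norm_num
  · -- 0, 1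
    obtain ⟨j0, hj0⟩ := h0; obtain ⟨j1, hj1⟩ := h1
    have hr : Set.range f = ({0, 1} : Set (Fin 3)) := by
      ext v
      simp only [Set.mem_range, Set.mem_insert_iff, Set.mem_singleton_iff]
      constructor
      · rintro ⟨j, rfl⟩
        rcases fin3 (f j) with h | h | h
        · exact Or.inl h
        · exact Or.inr h
        · exact absurd ⟨j, h⟩ h2
      · rintro (rfl | rfl)
        · exact ⟨j0, hj0⟩
        · exact ⟨j1, hj1⟩
    rw [hr, steinerDist_pair pathG_adj01, prod_a01_one h2,
      Finset.prod_eq_zero (Finset.mem_univ j0) (by simp [a12, hj0]),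
      Finset.prod_eq_zero (Finset.mem_univ j1) (by simp [a0, hj1]),
      Finset.prod_eq_zero (Finset.mem_univ j1) (by simp [a2, hj1])]
    norm_num
  · -- 0, 2
    obtain ⟨j0, hj0⟩ := h0; obtain ⟨j2, hj2⟩ := h2
    rw [steinerDist_two (S := Set.range f) ⟨j0, hj0⟩ ⟨j2, hj2⟩,
      Finset.prod_eq_zero (Finset.mem_univ j2) (by simp [a01, hj2]),
      Finset.prod_eq_zero (Finset.mem_univ j0) (by simp [a12, hj0]),
      Finset.prod_eq_zero (Finset.mem_univ j2) (by simp [a0, hj2]),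
      Finset.prod_eq_zero (Finset.mem_univ j0) (by simp [a2, hj0])]
    norm_num
  · -- 0 only
    obtain ⟨j0, hj0⟩ := h0
    have hall : ∀ j, f j = 0 := by
      intro j
      rcases fin3 (f j) with h | h | h
      · exact h
      · exact absurd ⟨j, h⟩ h1
      · exact absurd ⟨j, h⟩ h2
    have hr : Set.range f = ({0} : Set (Fin 3)) := by
      ext v
      simp only [Set.mem_range, Set.mem_singleton_iff]
      exact ⟨fun ⟨j, hj⟩ => hj ▸ hall j, fun h => ⟨j0, h ▸ hj0⟩⟩
    rw [hr, steinerDist_singleton, prod_a01_one h2,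
      Finset.prod_eq_zero (Finset.mem_univ j0) (by simp [a12, hj0]),
      Finset.prod_eq_one (fun j _ => by simp [a0, hall j]),
      Finset.prod_eq_zero (Finset.mem_univ j0) (by simp [a2, hj0])]
    norm_num
  · -- 1, 2
    obtain ⟨j1, hj1⟩ := h1; obtain ⟨j2, hj2⟩ := h2
    have hr : Set.range f = ({1, 2} : Set (Fin 3)) := by
      ext v
      simp only [Set.mem_range, Set.mem_insert_iff, Set.mem_singleton_iff]
      constructor
      · rintro ⟨j, rfl⟩
        rcases fin3 (f j) with h | h | h
        · exact absurd ⟨j, h⟩ h0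
        · exact Or.inl h
        · exact Or.inr h
      · rintro (rfl | rfl)
        · exact ⟨j1, hj1⟩
        · exact ⟨j2, hj2⟩
    rw [hr, steinerDist_pair pathG_adj12,
      Finset.prod_eq_zero (Finset.mem_univ j2) (by simp [a01, hj2]),
      prod_a12_one h0,
      Finset.prod_eq_zero (Finset.mem_univ j1) (by simp [a0, hj1]),
      Finset.prod_eq_zero (Finset.mem_univ j1) (by simp [a2, hj1])]
    norm_num
  · -- 1 only
    obtain ⟨j1, hj1⟩ := h1
    have hall : ∀ j, f j = 1 := by
      intro j
      rcases fin3 (f j) with h | h | h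
      · exact absurd ⟨j, h⟩ h0
      · exact h
      · exact absurd ⟨j, h⟩ h2
    have hr : Set.range f = ({1} : Set (Fin 3)) := by
      ext v
      simp only [Set.mem_range, Set.mem_singleton_iff]
      exact ⟨fun ⟨j, hj⟩ => hj ▸ hall j, fun h => ⟨j1, h ▸ hj1⟩⟩
    rw [hr, steinerDist_singleton, prod_a01_one h2, prod_a12_one h0,
      Finset.prod_eq_zero (Finset.mem_univ j1) (by simp [a0, hj1]),
      Finset.prod_eq_zero (Finset.mem_univ j1) (by simp [a2, hj1])]
    norm_num
  · -- 2 only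
    obtain ⟨j2, hj2⟩ := h2
    have hall : ∀ j, f j = 2 := by
      intro j
      rcases fin3 (f j) with h | h | h
      · exact absurd ⟨j, h⟩ h0
      · exact absurd ⟨j, h⟩ h1
      · exact h
    have hr : Set.range f = ({2} : Set (Fin 3)) := by
      ext v
      simp only [Set.mem_range, Set.mem_singleton_iff]
      exact ⟨fun ⟨j, hj⟩ => hj ▸ hall j, fun h => ⟨j2, h ▸ hj2⟩⟩
    rw [hr, steinerDist_singleton,
      Finset.prod_eq_zero (Finset.mem_univ j2) (by simp [a01, hj2]),
      prod_a12_one h0,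
      Finset.prod_eq_zero (Finset.mem_univ j2) (by simp [a0, hj2]),
      Finset.prod_eq_one (fun j _ => by simp [a2, hall j])]
    norm_num
  · -- impossible
    exact absurd (fin3 (f ⟨0, Nat.pos_of_ne_zero hk⟩)) (by
      push_neg
      exact ⟨fun h => h0 ⟨_, h⟩, fun h => h1 ⟨_, h⟩, fun h => h2 ⟨_, h⟩⟩)

lemma form_eq {k : ℕ} (hk : k ≠ 0) :
    steinerForm pathG k =
      2 * (X 0 + X 1 + X 2) ^ k - (X 0 + X 1) ^ k - (X 1 + X 2) ^ k
        - (X 0 : MvPolynomial (Fin 3) ℂ) ^ k - (X 2) ^ k := by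
  have e1 : ((X 0 + X 1 + X 2 : MvPolynomial (Fin 3) ℂ)) ^ k
      = ∑ f : Fin k → Fin 3, ∏ j, X (f j) := by
    rw [show (X 0 + X 1 + X 2 : MvPolynomial (Fin 3) ℂ) = ∑ v, X v by
      rw [Fin.sum_univ_three]]
    exact Fintype.sum_pow _ k
  have e2 : ((X 0 + X 1 : MvPolynomial (Fin 3) ℂ)) ^ k
      = ∑ f : Fin k → Fin 3, ∏ j, (a01 (f j) * X (f j)) := by
    rw [show (X 0 + X 1 : MvPolynomial (Fin 3) ℂ) = ∑ v, a01 v * X v by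
      rw [Fin.sum_univ_three]; simp [a01]]
    exact Fintype.sum_pow _ k
  have e3 : ((X 1 + X 2 : MvPolynomial (Fin 3) ℂ)) ^ k
      = ∑ f : Fin k → Fin 3, ∏ j, (a12 (f j) * X (f j)) := by
    rw [show (X 1 + X 2 : MvPolynomial (Fin 3) ℂ) = ∑ v, a12 v * X v by
      rw [Fin.sum_univ_three]; simp [a12]]
    exact Fintype.sum_pow _ k
  have e4 : ((X 0 : MvPolynomial (Fin 3) ℂ)) ^ k
      = ∑ f : Fin k → Fin 3, ∏ j, (a0 (f j) * X (f j)) := by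
    rw [show (X 0 : MvPolynomial (Fin 3) ℂ) = ∑ v, a0 v * X v by
      rw [Fin.sum_univ_three]; simp [a0]]
    exact Fintype.sum_pow _ k
  have e5 : ((X 2 : MvPolynomial (Fin 3) ℂ)) ^ k
      = ∑ f : Fin k → Fin 3, ∏ j, (a2 (f j) * X (f j)) := by
    rw [show (X 2 : MvPolynomial (Fin 3) ℂ) = ∑ v, a2 v * X v by
      rw [Fin.sum_univ_three]; simp [a2]]
    exact Fintype.sum_pow _ k
  rw [steinerForm]
  calc ∑ f : Fin k → Fin 3,
        (steinerDist pathG (Set.range f) : MvPolynomial (Fin 3) ℂ) * ∏ j, X (f j)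
      = ∑ f : Fin k → Fin 3,
        ((2 - (∏ j, a01 (f j)) - (∏ j, a12 (f j)) - (∏ j, a0 (f j)) - (∏ j, a2 (f j)))
          * ∏ j, X (f j)) := Finset.sum_congr rfl fun f _ => by rw [key hk f]
    _ = 2 * (X 0 + X 1 + X 2) ^ k - (X 0 + X 1) ^ k - (X 1 + X 2) ^ k
        - (X 0 : MvPolynomial (Fin 3) ℂ) ^ k - (X 2) ^ k := by
        simp only [sub_mul, Finset.sum_sub_distrib, ← Finset.prod_mul_distrib,
          ← Finset.mul_sum]
        rw [e1, e2, e3, e4, e5]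

/-- For odd `k ≥ 3`, the Steiner `k`-form of the path `0 - 1 - 2` on three vertices has a
nonzero common zero of all its partial derivatives. -/
theorem stmt14 (k : ℕ) (hk : Odd k) (hk3 : 3 ≤ k) :
    ∃ x : Fin 3 → ℂ, x ≠ 0 ∧
      IsSteinerNullvector (SimpleGraph.fromEdgeSet {s((0 : Fin 3), 1), s(1, 2)}) k x := by
  have hk0 : k ≠ 0 := by omega
  have hk1 : k - 1 ≠ 0 := by omega
  have heven : Even (k - 1) := Nat.Odd.sub_odd hk odd_one
  set ζ : ℂ := Complex.exp (Real.pi * Complex.I / (k - 1 : ℕ)) with hζdef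
  have hζ : ζ ^ (k - 1) = -1 := by
    rw [hζdef, ← Complex.exp_nat_mul]
    rw [mul_div_cancel₀ _ (by exact_mod_cast hk1 : ((k - 1 : ℕ) : ℂ) ≠ 0)]
    exact Complex.exp_pi_mul_I
  refine ⟨![1, -1 - ζ, ζ], ?_, ?_⟩
  · intro h
    have := congrFun h 0
    simp at this
  · intro j
    have hform : steinerForm (SimpleGraph.fromEdgeSet {s((0 : Fin 3), 1), s(1, 2)}) k =
        2 * (X 0 + X 1 + X 2) ^ k - (X 0 + X 1) ^ k - (X 1 + X 2) ^ k
          - (X 0 : MvPolynomial (Fin 3) ℂ) ^ k - (X 2) ^ k := form_eq hk0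
    rw [hform]
    have hT : (1 : ℂ) + (-1 - ζ) + ζ = 0 := by ring
    have hzp : (0 : ℂ) ^ (k - 1) = 0 := zero_pow hk1
    have hnζ : (-ζ) ^ (k - 1) = -1 := by rw [heven.neg_pow, hζ]
    have hn1 : (-1 : ℂ) ^ (k - 1) = 1 := heven.neg_one_pow
    fin_cases j <;>
      simp [pderiv_pow, pderiv_X, Pi.single_apply, Matrix.cons_val_zero, Matrix.cons_val_one,
        Matrix.head_cons] <;>
      · rw [show (1 : ℂ) + (-1 - ζ) = -ζ from by ring]
        rw [show -ζ + ζ = 0 from by ring, zero_pow hk1, zero_pow hk0]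
        simp only [hnζ, hn1, hζ]
        ring
end
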